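/- Let (X,d) be a proper δ-hyperbolic geodesic space and f : X → ℝ a K-convex (K ≥ 0), L-Lipschitz (L > 0) function with minimizer p. Take x_1, x_2 ∈ X, τ > 0, y_i ∈ argmin_z { f(z) + d²(x_i,z)/(2τ) } for i = 1,2, with d(p,y_1) ≤ d(p,y_2). If d(p,y_1) ≥ (x_1|x_2)_p, then d(y_1,y_2) ≤ d(x_1,x_2) − d(x_1,y_1) − d(x_2,y_2) + 8√(2τLδ)/√(Kτ+1) + 12δ. -/
import Mathlib


open Set

/-- Gromov product `(y|z)_x`. -/
noncomputable def gp {X : Type*} [MetricSpace X] (x y z : X) : ℝ :=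
  (dist x y + dist x z - dist y z) / 2

/-- `δ`-hyperbolicity. -/
def IsDeltaHyp (X : Type*) [MetricSpace X] (δ : ℝ) : Prop :=
  ∀ p x y z : X, gp p x z ≥ min (gp p x y) (gp p y z) - δ

/-- `γ` is a (constant-speed, unit-interval) geodesic from `x` to `y`. -/
def IsGeodesic {X : Type*} [MetricSpace X] (γ : ℝ → X) (x y : X) : Prop :=
  γ 0 = x ∧ γ 1 = y ∧
    ∀ s ∈ Icc (0:ℝ) 1, ∀ t ∈ Icc (0:ℝ) 1, dist (γ s) (γ t) = |s - t| * dist x y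

/-- Geodesic space. -/
def GeodesicSpace (X : Type*) [MetricSpace X] : Prop :=
  ∀ x y : X, ∃ γ : ℝ → X, IsGeodesic γ x y

/-- (Weak, geodesic) `K`-convexity. -/
def KConvex {X : Type*} [MetricSpace X] (K : ℝ) (f : X → ℝ) : Prop :=
  ∀ x y : X, ∃ γ : ℝ → X, IsGeodesic γ x y ∧
    ∀ t ∈ Icc (0:ℝ) 1,
      f (γ t) ≤ (1 - t) * f x + t * f y - K / 2 * (1 - t) * t * dist x y ^ 2

/-- `L`-Lipschitz continuity. -/
def LipschitzL {X : Type*} [MetricSpace X] (L : ℝ) (f : X → ℝ) : Prop :=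
  ∀ x y : X, |f x - f y| ≤ L * dist x y

/-- `y` belongs to the proximal set `J^f_τ(x)`. -/
def IsProx {X : Type*} [MetricSpace X] (f : X → ℝ) (τ : ℝ) (x y : X) : Prop :=
  ∀ z : X, f y + dist x y ^ 2 / (2 * τ) ≤ f z + dist x z ^ 2 / (2 * τ)

/-- Gromov products are nonnegative. -/
lemma gp_nonneg {X : Type*} [MetricSpace X] (x y z : X) : 0 ≤ gp x y z := by
  have h := dist_triangle y x z
  rw [dist_comm y x] at h
  unfold gp
  linarith

/-- From `u² ≤ v²` with both nonnegative, `u ≤ v`. -/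
lemma sq_le_of {u v : ℝ} (hu : 0 ≤ u) (hv : 0 ≤ v) (h : u ^ 2 ≤ v ^ 2) : u ≤ v := by
  nlinarith [sq_nonneg (u - v), sq_nonneg (u + v)]

set_option maxHeartbeats 1600000 in
/-- Key per-point bounds on the Gromov product `(x|p)_y` for a proximal point `y`. -/
lemma prox_gp_bound {X : Type*} [MetricSpace X]
    {δ K L τ : ℝ} (hδ : 0 ≤ δ) (hK : 0 ≤ K) (hL : 0 < L) (hτ : 0 < τ)
    (hX : IsDeltaHyp X δ) (f : X → ℝ)
    (hconv : KConvex K f) (hlip : LipschitzL L f)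
    (p : X) (hp : ∀ z : X, f p ≤ f z)
    (x y : X) (hy : IsProx f τ x y) :
    gp y x p ≤ 2 * δ ∧ (K * τ + 1) * (gp y x p) ^ 2 ≤ 8 * (τ * L * δ) := by
  have h2τ : (0:ℝ) < 2 * τ := by linarith
  have hclr : ∀ u v s t : ℝ, u + s / (2 * τ) ≤ v + t / (2 * τ) →
      2 * τ * u + s ≤ 2 * τ * v + t := by
    intro u v s t h
    have e : ∀ w : ℝ, 2 * τ * (w / (2 * τ)) = w := by
      intro w; field_simp
    have h' := mul_le_mul_of_nonneg_left h h2τ.le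
    rw [mul_add, mul_add, e, e] at h'
    exact h'
  obtain ⟨g, hgg⟩ : ∃ g, g = gp y x p := ⟨_, rfl⟩
  rw [← hgg]
  have hgdef : g = (dist y x + dist y p - dist x p) / 2 := by rw [hgg]; rfl
  have hA0 : (0:ℝ) ≤ dist y x := dist_nonneg
  have hB0 : (0:ℝ) ≤ dist y p := dist_nonneg
  have hg0 : 0 ≤ g := hgg ▸ gp_nonneg y x p
  have hgA : g ≤ dist y x := by
    have h := dist_triangle y x p
    rw [hgdef]; linarith
  have hgB : g ≤ dist y p := by
    have h := dist_triangle y p x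
    rw [dist_comm p x] at h
    rw [hgdef]; linarith
  -- F1 : dist y x ≤ dist x p
  have hAC : dist y x ≤ dist x p := by
    have h1 := hy p
    rw [dist_comm x y] at h1
    have h3 := hclr _ _ _ _ h1
    have h2 := hp y
    apply sq_le_of hA0 dist_nonneg
    nlinarith [h3, mul_le_mul_of_nonneg_left h2 h2τ.le]
  -- F2 : dist y x * (3 + K*τ) ≤ 4*(τ*L)
  have hone : (1:ℝ) ∈ Icc (0:ℝ) 1 := ⟨zero_le_one, le_refl 1⟩
  have hF2 : dist y x * (3 + K * τ) ≤ 4 * (τ * L) := by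
    obtain ⟨γ, ⟨hγ0, hγ1, hγd⟩, hcvx⟩ := hconv y x
    have hhalf : (1/2 : ℝ) ∈ Icc (0:ℝ) 1 := ⟨by norm_num, by norm_num⟩
    have hdm : dist x (γ (1/2)) = (1/2) * dist y x := by
      have h := hγd (1/2) hhalf 1 hone
      rw [hγ1] at h
      rw [dist_comm x (γ (1/2)), h]
      norm_num
    have hcv := hcvx (1/2) hhalf
    have habs : f x - f y ≤ L * dist y x := by
      have h := (abs_le.mp (hlip x y)).2
      rw [dist_comm x y] at h
      exact h
    have hprox := hy (γ (1/2))
    rw [dist_comm x y] at hprox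
    have h3 := hclr _ _ _ _ hprox
    rw [hdm] at h3
    rcases eq_or_lt_of_le hA0 with h0 | hApos
    · rw [← h0]
      have : (0:ℝ) ≤ 4 * (τ * L) := by positivity
      linarith
    · have hq : dist y x ^ 2 * (3 + K * τ) ≤ 4 * (τ * L) * dist y x := by
        nlinarith [h3, mul_le_mul_of_nonneg_left hcv h2τ.le,
          mul_le_mul_of_nonneg_left habs hτ.le]
      apply le_of_mul_le_mul_right _ hApos
      linear_combination hq
  have h3AL : 3 * dist y x ≤ 4 * (τ * L) := by
    nlinarith [hF2, mul_nonneg (mul_nonneg hK hτ.le) hA0]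
  by_cases hB' : dist y p = 0
  · -- degenerate case
    have hg00 : g = 0 := le_antisymm (by rw [hB'] at hgB; exact hgB) hg0
    have hpos : (0:ℝ) ≤ 8 * (τ * L * δ) := by positivity
    constructor
    · rw [hg00]; linarith
    · rw [hg00]; norm_num; positivity
  · have hBpos : 0 < dist y p := lt_of_le_of_ne hB0 (Ne.symm hB')
    obtain ⟨γ, ⟨hγ0, hγ1, hγd⟩, hcvx⟩ := hconv y p
    obtain ⟨t, htdef⟩ : ∃ t, t = g / dist y p := ⟨_, rfl⟩
    have ht0 : 0 ≤ t := by rw [htdef]; exact div_nonneg hg0 hBpos.le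
    have ht1 : t ≤ 1 := by rw [htdef]; exact (div_le_one hBpos).mpr hgB
    have htmem : t ∈ Icc (0:ℝ) 1 := ⟨ht0, ht1⟩
    have htB : t * dist y p = g := by rw [htdef]; exact div_mul_cancel₀ g hBpos.ne'
    have hzero : (0:ℝ) ∈ Icc (0:ℝ) 1 := ⟨le_refl 0, zero_le_one⟩
    have hym : dist y (γ t) = g := by
      have h := hγd 0 hzero t htmem
      rw [hγ0] at h
      rw [h, zero_sub, abs_neg, abs_of_nonneg ht0]
      exact htB
    have hpm : dist p (γ t) = dist y p - g := by
      have h := hγd 1 hone t htmem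
      rw [hγ1] at h
      rw [h, abs_of_nonneg (by linarith : (0:ℝ) ≤ 1 - t)]
      rw [sub_mul, one_mul, htB]
    have hgpm : gp y p (γ t) = g := by
      show (dist y p + dist y (γ t) - dist p (γ t)) / 2 = g
      rw [hym, hpm]; ring
    have h4 := hX y x p (γ t)
    rw [hgpm, ← hgg, min_self] at h4
    have h6 : dist x (γ t) ≤ dist y x - g + 2 * δ := by
      have h7 : (dist y x + dist y (γ t) - dist x (γ t)) / 2 ≥ g - δ := h4
      rw [hym] at h7
      linarith
    have hxm2 : dist x (γ t) ^ 2 ≤ (dist y x - g + 2 * δ) ^ 2 := by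
      have hh : (0:ℝ) ≤ dist y x - g + 2 * δ := by linarith
      nlinarith [dist_nonneg (x := x) (y := γ t), h6, hh]
    have hprox := hy (γ t)
    rw [dist_comm x y] at hprox
    have h7 := hclr _ _ _ _ hprox
    have hcv := hcvx t htmem
    have hcvK : K / 2 * (1 - t) * t * dist y p ^ 2 = K / 2 * ((dist y p - g) * g) := by
      have e1 : (1 - t) * dist y p = dist y p - g := by
        rw [sub_mul, one_mul, htB]
      calc K / 2 * (1 - t) * t * dist y p ^ 2
          = K / 2 * (((1 - t) * dist y p) * (t * dist y p)) := by ring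
        _ = K / 2 * ((dist y p - g) * g) := by rw [e1, htB]
    rw [hcvK] at hcv
    have hfp := hp y
    have h8 : 2 * τ * f (γ t)
        ≤ 2 * τ * ((1 - t) * f y + t * f p - K / 2 * ((dist y p - g) * g)) :=
      mul_le_mul_of_nonneg_left hcv h2τ.le
    have h9 : 2 * τ * t * f p ≤ 2 * τ * t * f y :=
      mul_le_mul_of_nonneg_left hfp (mul_nonneg h2τ.le ht0)
    have core : dist y x ^ 2 + K * τ * ((dist y p - g) * g)
        ≤ (dist y x - g + 2 * δ) ^ 2 := by
      nlinarith [h7, hxm2, h8, h9]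
    have hbg2 : 2 * g ≤ dist y p := by
      rw [hgdef]; linarith [hAC]
    constructor
    · by_contra hcon
      push_neg at hcon
      have h1 : g * (g - 2 * δ) ≤ dist y x * (g - 2 * δ) :=
        mul_le_mul_of_nonneg_right hgA (by linarith)
      have h2 : 0 < (g - 2 * δ) * (g + 2 * δ) :=
        mul_pos (by linarith) (by linarith)
      have h3 : 0 ≤ K * τ * ((dist y p - g) * g) :=
        mul_nonneg (mul_nonneg hK hτ.le) (mul_nonneg (by linarith) hg0)
      nlinarith [core, h1, h2, h3]
    · have hs1 : (0:ℝ) ≤ K * τ := mul_nonneg hK hτ.le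
      have f5 : (0:ℝ) ≤ τ * L * δ := mul_nonneg (mul_nonneg hτ.le hL.le) hδ
      rcases le_or_gt δ g with hcs | hcs
      · have f1 : 0 ≤ K * τ * (g * (dist y p - 2 * g)) :=
          mul_nonneg hs1 (mul_nonneg hg0 (by linarith))
        have f2 : 0 ≤ (dist y x - g) * g := mul_nonneg (by linarith) hg0
        have f3 : 0 ≤ (g - δ) * δ := mul_nonneg (by linarith) hδ
        have f4 : 3 * dist y x * δ ≤ 4 * (τ * L) * δ :=
          mul_le_mul_of_nonneg_right h3AL hδ
        nlinarith [core, f1, f2, f3, f4, f5]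
      · have h1A : (K * τ + 1) * dist y x ≤ 4 * (τ * L) := by
          nlinarith [hF2, hA0]
        have f1 : 0 ≤ (K * τ + 1) * (g * (dist y x - g)) :=
          mul_nonneg (by linarith) (mul_nonneg hg0 (by linarith))
        have f2 : 0 ≤ (K * τ + 1) * (dist y x * (δ - g)) :=
          mul_nonneg (by linarith) (mul_nonneg hA0 (by linarith))
        have f3 : (K * τ + 1) * dist y x * δ ≤ 4 * (τ * L) * δ :=
          mul_le_mul_of_nonneg_right h1A hδ
        nlinarith [f1, f2, f3, f5]

/-- Conversion to the square-root form of the bound. -/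
lemma le_twice_sqrt {K τ L δ g : ℝ} (hg0 : 0 ≤ g) (hKτ : 0 ≤ K * τ)
    (h2 : 0 ≤ 2 * τ * L * δ) (h : (K * τ + 1) * g ^ 2 ≤ 8 * (τ * L * δ)) :
    g ≤ 2 * Real.sqrt (2 * τ * L * δ) / Real.sqrt (K * τ + 1) := by
  have hpos : (0:ℝ) < K * τ + 1 := by linarith
  have hsq : (2 * Real.sqrt (2 * τ * L * δ) / Real.sqrt (K * τ + 1)) ^ 2
      = 8 * (τ * L * δ) / (K * τ + 1) := by
    rw [div_pow, mul_pow, Real.sq_sqrt h2, Real.sq_sqrt hpos.le]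
    ring
  have hrhs : 0 ≤ 2 * Real.sqrt (2 * τ * L * δ) / Real.sqrt (K * τ + 1) :=
    div_nonneg (by positivity) (Real.sqrt_nonneg _)
  apply sq_le_of hg0 hrhs
  rw [hsq, le_div_iff₀ hpos]
  linarith [h]

theorem contraction_case_one {X : Type*} [MetricSpace X] [ProperSpace X]
    {δ K L τ : ℝ} (hδ : 0 ≤ δ) (hK : 0 ≤ K) (hL : 0 < L) (hτ : 0 < τ)
    (hX : IsDeltaHyp X δ) (hgeo : GeodesicSpace X) (f : X → ℝ)
    (hconv : KConvex K f) (hlip : LipschitzL L f)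
    (p : X) (hp : ∀ z : X, f p ≤ f z)
    (x₁ x₂ y₁ y₂ : X) (hy₁ : IsProx f τ x₁ y₁) (hy₂ : IsProx f τ x₂ y₂)
    (hord : dist p y₁ ≤ dist p y₂) (hcase : dist p y₁ ≥ gp p x₁ x₂) :
    dist y₁ y₂ ≤ dist x₁ x₂ - dist x₁ y₁ - dist x₂ y₂ +
      8 * Real.sqrt (2 * τ * L * δ) / Real.sqrt (K * τ + 1) + 12 * δ := by
  obtain ⟨hF4₁, hF5₁⟩ := prox_gp_bound hδ hK hL hτ hX f hconv hlip p hp x₁ y₁ hy₁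
  obtain ⟨hF4₂, hF5₂⟩ := prox_gp_bound hδ hK hL hτ hX f hconv hlip p hp x₂ y₂ hy₂
  have h2' : (0:ℝ) ≤ 2 * τ * L * δ :=
    mul_nonneg (mul_nonneg (mul_nonneg (by norm_num) hτ.le) hL.le) hδ
  set E := 2 * Real.sqrt (2 * τ * L * δ) / Real.sqrt (K * τ + 1) with hE
  have hE0 : 0 ≤ E := div_nonneg (by positivity) (Real.sqrt_nonneg _)
  have hE1 : gp y₁ x₁ p ≤ E :=
    le_twice_sqrt (gp_nonneg y₁ x₁ p) (mul_nonneg hK hτ.le) h2' hF5₁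
  have hE2 : gp y₂ x₂ p ≤ E :=
    le_twice_sqrt (gp_nonneg y₂ x₂ p) (mul_nonneg hK hτ.le) h2' hF5₂
  set M := min (2 * δ) E with hM
  have hM1 : M ≤ 2 * δ := min_le_left _ _
  have hM2 : M ≤ E := min_le_right _ _
  have hM0 : 0 ≤ M := le_min (by linarith) hE0
  have hgM₁ : gp y₁ x₁ p ≤ M := le_min hF4₁ hE1
  have hgM₂ : gp y₂ x₂ p ≤ M := le_min hF4₂ hE2
  -- bookkeeping identities
  have e₁ : gp p y₁ x₁ = dist p y₁ - gp y₁ x₁ p := by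
    unfold gp
    rw [dist_comm y₁ p, dist_comm x₁ p]
    ring
  have e₂ : gp p x₂ y₂ = dist p y₂ - gp y₂ x₂ p := by
    unfold gp
    rw [dist_comm y₂ p, dist_comm x₂ p, dist_comm x₂ y₂]
    ring
  have e₃ : dist y₁ y₂ = dist p y₁ + dist p y₂ - 2 * gp p y₁ y₂ := by
    unfold gp; ring
  have e₄ : 2 * gp p x₁ x₂ = dist p x₁ + dist p x₂ - dist x₁ x₂ := by
    unfold gp; ring
  have e₅ : dist p y₁ = dist p x₁ - dist x₁ y₁ + 2 * gp y₁ x₁ p := by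
    unfold gp
    rw [dist_comm y₁ x₁, dist_comm y₁ p, dist_comm x₁ p]
    ring
  have e₆ : dist p y₂ = dist p x₂ - dist x₂ y₂ + 2 * gp y₂ x₂ p := by
    unfold gp
    rw [dist_comm y₂ x₂, dist_comm y₂ p, dist_comm x₂ p]
    ring
  -- the chain of hyperbolic inequalities
  have hB2 : dist p y₂ ≥ gp p x₁ x₂ := le_trans hcase hord
  have h4a := hX p y₁ x₁ y₂
  have h4b := hX p x₁ x₂ y₂
  have lb1 : gp p y₁ x₁ ≥ gp p x₁ x₂ - M := by
    rw [e₁]; linarith [hgM₁, hcase]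
  have lb2 : gp p x₂ y₂ ≥ gp p x₁ x₂ - M := by
    rw [e₂]; linarith [hgM₂, hB2]
  have lb3 : gp p x₁ y₂ ≥ gp p x₁ x₂ - M - δ := by
    have hmin : gp p x₁ x₂ - M ≤ min (gp p x₁ x₂) (gp p x₂ y₂) :=
      le_min (by linarith) lb2
    linarith [h4b]
  have hchain : gp p y₁ y₂ ≥ gp p x₁ x₂ - M - 2 * δ := by
    have hmin : gp p x₁ x₂ - M - δ ≤ min (gp p y₁ x₁) (gp p x₁ y₂) :=
      le_min (by linarith [lb1]) lb3
    linarith [h4a]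
  have eE : 8 * Real.sqrt (2 * τ * L * δ) / Real.sqrt (K * τ + 1) = 4 * E := by
    rw [hE]; ring
  rw [eE]
  linarith [e₃, e₄, e₅, e₆, hchain, hgM₁, hgM₂, hM1, hM2, hδ, hM0]
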